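/- Let K be a field, let A, B, C be finite-dimensional K-vector spaces, let i : A → B be an injective linear map and j : A → C a linear map, and let P = B ⊔_A C be the pushout of i and j, with structure maps k : B → P and l : C → P. Suppose a : A → A, b : B → B, c : C → C are linear endomorphisms with b ∘ i = i ∘ a and c ∘ j = j ∘ a, and let p : P → P be the endomorphism induced on the pushout (the unique map with p ∘ k = k ∘ b and p ∘ l = l ∘ c). Then trace(p) = trace(b) + trace(c) − trace(a). -/

import Mathlib

open LinearMap

private lemma trace_prod_decomp (K M N : Type*) [Field K]
    [AddCommGroup M] [Module K M] [FiniteDimensional K M]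
    [AddCommGroup N] [Module K N] [FiniteDimensional K N]
    (φ : (M × N) →ₗ[K] (M × N)) :
    trace K (M × N) φ =
      trace K M (fst K M N ∘ₗ φ ∘ₗ inl K M N) + trace K N (snd K M N ∘ₗ φ ∘ₗ inr K M N) := by
  have hφ : φ = (inl K M N ∘ₗ (fst K M N ∘ₗ φ)) + (inr K M N ∘ₗ (snd K M N ∘ₗ φ)) := by
    ext x <;> simp
  calc trace K (M × N) φ
      = trace K (M × N) (inl K M N ∘ₗ (fst K M N ∘ₗ φ))
        + trace K (M × N) (inr K M N ∘ₗ (snd K M N ∘ₗ φ)) := by rw [← map_add, ← hφ]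
    _ = trace K M (fst K M N ∘ₗ φ ∘ₗ inl K M N) + trace K N (snd K M N ∘ₗ φ ∘ₗ inr K M N) := by
        rw [trace_comp_comm' _ (inl K M N), trace_comp_comm' _ (inr K M N)]; rfl



/-- Inclusion-exclusion for traces on a pushout of finite-dimensional vector spaces.
`P` is the pushout of `i : A → B` (injective) and `j : A → C`, presented as the
cokernel of `x ↦ (i x, -j x)`: the map `(x, y) ↦ k x + l y : B × C → P` is surjective
with kernel exactly the range of `x ↦ (i x, -j x)`.  If `a, b, c` are compatible
endomorphisms of `A, B, C` and `p` is the induced endomorphism of the pushout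
(i.e. `p ∘ k = k ∘ b` and `p ∘ l = l ∘ c`), then `tr p = tr b + tr c - tr a`. -/
theorem trace_pushout
    (K : Type*) [Field K]
    (A B C P : Type*)
    [AddCommGroup A] [Module K A] [FiniteDimensional K A]
    [AddCommGroup B] [Module K B] [FiniteDimensional K B]
    [AddCommGroup C] [Module K C] [FiniteDimensional K C]
    [AddCommGroup P] [Module K P] [FiniteDimensional K P]
    (i : A →ₗ[K] B) (j : A →ₗ[K] C) (hi : Function.Injective i)
    (k : B →ₗ[K] P) (l : C →ₗ[K] P)
    (hsurj : Function.Surjective (k.coprod l))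
    (hker : LinearMap.ker (k.coprod l) = LinearMap.range (i.prod (-j)))
    (a : A →ₗ[K] A) (b : B →ₗ[K] B) (c : C →ₗ[K] C)
    (hb : b ∘ₗ i = i ∘ₗ a) (hc : c ∘ₗ j = j ∘ₗ a)
    (p : P →ₗ[K] P) (hpk : p ∘ₗ k = k ∘ₗ b) (hpl : p ∘ₗ l = l ∘ₗ c) :
    LinearMap.trace K P p =
      LinearMap.trace K B b + LinearMap.trace K C c - LinearMap.trace K A a := by
  set f : A →ₗ[K] B × C := i.prod (-j) with hf
  set q : B × C →ₗ[K] P := k.coprod l with hq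
  set d : (B × C) →ₗ[K] (B × C) := b.prodMap c with hd
  have hdf : d ∘ₗ f = f ∘ₗ a := by
    rw [hd, hf]; ext x
    · simpa using LinearMap.ext_iff.mp hb x
    · simpa using LinearMap.ext_iff.mp hc x
  have hqd : q ∘ₗ d = p ∘ₗ q := by
    rw [hd, hq]; ext x
    · simpa using (LinearMap.ext_iff.mp hpk x).symm
    · simpa using (LinearMap.ext_iff.mp hpl x).symm
  have hfinj : Function.Injective f := by
    intro x y h
    exact hi (congrArg Prod.fst h)
  set S : Submodule K (B × C) := LinearMap.range f with hS
  obtain ⟨W, hW⟩ := Submodule.exists_isCompl S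
  let e : (S × W) ≃ₗ[K] (B × C) := Submodule.prodEquivOfIsCompl S W hW
  let d' : (S × W) →ₗ[K] (S × W) := e.symm.conj d
  have htr : trace K (B × C) d = trace K (↥S × ↥W) d' := (trace_conj' d e.symm).symm
  -- first block: conjugate of a
  let eA : A ≃ₗ[K] S := LinearEquiv.ofInjective f hfinj
  have h1 : (fst K S W ∘ₗ d' ∘ₗ inl K S W) = (eA.conj a) := by
    apply LinearMap.ext
    rintro ⟨z, x, rfl⟩
    have hdfx : d (f x) = f (a x) := LinearMap.ext_iff.mp hdf x
    have h2 : e.symm (d (f x)) = (⟨f (a x), ⟨a x, rfl⟩⟩, 0) := by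
      rw [LinearEquiv.symm_apply_eq]
      simp [e, Submodule.coe_prodEquivOfIsCompl', hdfx]
    simp only [coe_comp, Function.comp_apply, inl_apply, fst_apply]
    show (e.symm.conj d (⟨f x, ⟨x, rfl⟩⟩, 0)).1 = eA.conj a ⟨f x, ⟨x, rfl⟩⟩
    rw [LinearEquiv.conj_apply, LinearEquiv.conj_apply]
    simp only [coe_comp, Function.comp_apply, LinearEquiv.coe_coe, LinearEquiv.symm_symm]
    have h4 : e (⟨f x, ⟨x, rfl⟩⟩, 0) = f x := by
      simp [e, Submodule.coe_prodEquivOfIsCompl']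
    rw [h4]
    have h5 : eA.symm ⟨f x, ⟨x, rfl⟩⟩ = x := by
      apply eA.injective; apply Subtype.ext
      simp [eA, LinearEquiv.ofInjective_apply]; rfl
    rw [h5, h2]
    apply Subtype.ext
    simp [eA, LinearEquiv.ofInjective_apply]; rfl
  -- q restricted to W is an equivalence onto P
  have hkerq : LinearMap.ker q = S := hker
  let qW : W →ₗ[K] P := q ∘ₗ W.subtype
  have hqWinj : Function.Injective qW := by
    intro x y h
    apply Subtype.ext
    have hxy : (x : B × C) - y ∈ LinearMap.ker q := by
      simp only [LinearMap.mem_ker, map_sub]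
      rw [show q x = q y from h, sub_self]
    rw [hkerq] at hxy
    have : (x : B × C) - y ∈ S ⊓ W := ⟨hxy, W.sub_mem x.2 y.2⟩
    rw [hW.inf_eq_bot] at this
    exact sub_eq_zero.mp this
  have hqWsurj : Function.Surjective qW := by
    intro z
    obtain ⟨y, rfl⟩ := hsurj z
    obtain ⟨s, w, hs, hw, hsw⟩ := Submodule.codisjoint_iff_exists_add_eq.mp hW.codisjoint y
    refine ⟨⟨w, hw⟩, ?_⟩
    have hqs : q s = 0 := by rw [← LinearMap.mem_ker, hkerq]; exact hs
    simp only [qW, coe_comp, Function.comp_apply, Submodule.coe_subtype]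
    rw [← hsw, map_add, hqs, zero_add]
  let eW : W ≃ₗ[K] P := LinearEquiv.ofBijective qW ⟨hqWinj, hqWsurj⟩
  have h6 : (snd K S W ∘ₗ d' ∘ₗ inr K S W) = eW.symm.conj p := by
    apply LinearMap.ext
    intro w
    simp only [coe_comp, Function.comp_apply, inr_apply, snd_apply, LinearEquiv.conj_apply,
      LinearEquiv.coe_coe, LinearEquiv.symm_symm]
    rw [LinearEquiv.eq_symm_apply]
    have heWw : eW w = q w := rfl
    have h7 : e (0, w) = (w : B × C) := by simp [e, Submodule.coe_prodEquivOfIsCompl']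
    have h8 : d' (0, w) = e.symm (d w) := by
      show e.symm.conj d (0, w) = _
      rw [LinearEquiv.conj_apply]
      simp only [coe_comp, Function.comp_apply, LinearEquiv.coe_coe, LinearEquiv.symm_symm, h7]
    have h9 : ((d' (0, w)).1 : B × C) + ((d' (0, w)).2 : B × C) = d w := by
      rw [h8]
      calc ((e.symm (d (w:B×C))).1 : B × C) + ((e.symm (d (w:B×C))).2 : B × C)
          = e (e.symm (d (w:B×C))) := (Submodule.coe_prodEquivOfIsCompl' _ _ hW _).symm
        _ = d (w : B × C) := e.apply_symm_apply _
    have h11 : eW ((d' (0, w)).2) = q ((d' (0, w)).2 : B × C) := rfl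
    have h12 : q (((d' (0, w)).1 : B × C)) = 0 := by
      rw [← LinearMap.mem_ker, hkerq]; exact (d' (0, w)).1.2
    have h13 : q (d (w : B × C)) = p (q (w : B × C)) := LinearMap.ext_iff.mp hqd _
    rw [h11, heWw]
    calc q ((d' (0, w)).2 : B × C)
        = q (((d' (0, w)).1 : B × C) + ((d' (0, w)).2 : B × C)) := by
          rw [map_add, h12, zero_add]
      _ = q (d (w : B × C)) := by rw [h9]
      _ = p (q (w : B × C)) := h13
  have hfinal : trace K A a + trace K P p = trace K B b + trace K C c := by
    rw [← trace_conj' a eA, ← trace_conj' p eW.symm, ← h1, ← h6, ← trace_prod_decomp, ← htr, hd,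
      trace_prodMap']
  linear_combination hfinal
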